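/- The convex hull P of {(x₁x₂x₃, x₁, x₂, x₃) : xᵢ ∈ [aᵢ,bᵢ]} equals the convex hull of the 8 points obtained by choosing each xᵢ ∈ {aᵢ, bᵢ}; i.e., the extreme points of P are exactly among the vertices of the box. -/

import Mathlib

private lemma mem_hull_of_icc {S : Set (EuclideanSpace ℝ (Fin 4))} {a b x : ℝ} (hab : a < b)
    (hx : x ∈ Set.Icc a b) {u v w : EuclideanSpace ℝ (Fin 4)}
    (hu : u ∈ convexHull ℝ S) (hv : v ∈ convexHull ℝ S)
    (hw : ∀ t s : ℝ, t + s = 1 → t * a + s * b = x → w = t • u + s • v) :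
    w ∈ convexHull ℝ S := by
  have hba : (0:ℝ) < b - a := by linarith
  set t := (b - x)/(b - a) with ht
  set s := (x - a)/(b - a) with hs
  have hts : t + s = 1 := by rw [ht, hs]; field_simp; ring
  have hcomb : t * a + s * b = x := by rw [ht, hs]; field_simp; ring
  have ht0 : 0 ≤ t := by
    apply div_nonneg _ hba.le; linarith [hx.2]
  have hs0 : 0 ≤ s := by
    apply div_nonneg _ hba.le; linarith [hx.1]
  rw [hw t s hts hcomb]
  exact (convex_convexHull ℝ S) hu hv ht0 hs0 hts

theorem convexhull_graph_eq_hull_vertices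
    (a₁ a₂ a₃ b₁ b₂ b₃ : ℝ)
    (ha₁ : 0 ≤ a₁) (ha₂ : 0 ≤ a₂) (ha₃ : 0 ≤ a₃)
    (hab₁ : a₁ < b₁) (hab₂ : a₂ < b₂) (hab₃ : a₃ < b₃) :
    convexHull ℝ
      ({p : EuclideanSpace ℝ (Fin 4) |
        ∃ x₁ ∈ Set.Icc a₁ b₁, ∃ x₂ ∈ Set.Icc a₂ b₂, ∃ x₃ ∈ Set.Icc a₃ b₃,
          p = ![x₁*x₂*x₃, x₁, x₂, x₃]}) =
    convexHull ℝ
      ({p : EuclideanSpace ℝ (Fin 4) |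
        ∃ x₁ ∈ ({a₁, b₁} : Set ℝ), ∃ x₂ ∈ ({a₂, b₂} : Set ℝ),
          ∃ x₃ ∈ ({a₃, b₃} : Set ℝ), p = ![x₁*x₂*x₃, x₁, x₂, x₃]}) := by
  set V : Set (EuclideanSpace ℝ (Fin 4)) :=
    {p : EuclideanSpace ℝ (Fin 4) |
        ∃ x₁ ∈ ({a₁, b₁} : Set ℝ), ∃ x₂ ∈ ({a₂, b₂} : Set ℝ),
          ∃ x₃ ∈ ({a₃, b₃} : Set ℝ), p = ![x₁*x₂*x₃, x₁, x₂, x₃]} with hV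
  have hmem : ∀ x₁ ∈ ({a₁, b₁} : Set ℝ), ∀ x₂ ∈ ({a₂, b₂} : Set ℝ),
      ∀ x₃ ∈ ({a₃, b₃} : Set ℝ),
      (WithLp.toLp 2 ![x₁*x₂*x₃, x₁, x₂, x₃] : EuclideanSpace ℝ (Fin 4)) ∈ convexHull ℝ V := by
    intro x₁ h₁ x₂ h₂ x₃ h₃
    exact subset_convexHull ℝ V ⟨x₁, h₁, x₂, h₂, x₃, h₃, rfl⟩
  have H3 : ∀ x₁ ∈ ({a₁, b₁} : Set ℝ), ∀ x₂ ∈ ({a₂, b₂} : Set ℝ),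
      ∀ x₃ ∈ Set.Icc a₃ b₃,
      (WithLp.toLp 2 ![x₁*x₂*x₃, x₁, x₂, x₃] : EuclideanSpace ℝ (Fin 4)) ∈ convexHull ℝ V := by
    intro x₁ h₁ x₂ h₂ x₃ h₃
    apply mem_hull_of_icc hab₃ h₃ (hmem x₁ h₁ x₂ h₂ a₃ (Or.inl rfl))
      (hmem x₁ h₁ x₂ h₂ b₃ (Or.inr rfl))
    intro t s hts hc
    ext i
    fin_cases i <;>
      simp [PiLp.add_apply, PiLp.smul_apply, smul_eq_mul]
    all_goals first
        | linear_combination (-(x₁*x₂)) * hc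
        | linear_combination (-x₁) * hts
        | linear_combination (-x₂) * hts
        | linear_combination -hc
  have H2 : ∀ x₁ ∈ ({a₁, b₁} : Set ℝ), ∀ x₂ ∈ Set.Icc a₂ b₂,
      ∀ x₃ ∈ Set.Icc a₃ b₃,
      (WithLp.toLp 2 ![x₁*x₂*x₃, x₁, x₂, x₃] : EuclideanSpace ℝ (Fin 4)) ∈ convexHull ℝ V := by
    intro x₁ h₁ x₂ h₂ x₃ h₃
    apply mem_hull_of_icc hab₂ h₂ (H3 x₁ h₁ a₂ (Or.inl rfl) x₃ h₃)
      (H3 x₁ h₁ b₂ (Or.inr rfl) x₃ h₃)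
    intro t s hts hc
    ext i
    fin_cases i <;>
      simp [PiLp.add_apply, PiLp.smul_apply, smul_eq_mul]
    all_goals first
        | linear_combination (-(x₁*x₃)) * hc
        | linear_combination (-x₁) * hts
        | linear_combination (-x₃) * hts
        | linear_combination -hc
  have H1 : ∀ x₁ ∈ Set.Icc a₁ b₁, ∀ x₂ ∈ Set.Icc a₂ b₂,
      ∀ x₃ ∈ Set.Icc a₃ b₃,
      (WithLp.toLp 2 ![x₁*x₂*x₃, x₁, x₂, x₃] : EuclideanSpace ℝ (Fin 4)) ∈ convexHull ℝ V := by
    intro x₁ h₁ x₂ h₂ x₃ h₃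
    apply mem_hull_of_icc hab₁ h₁ (H2 a₁ (Or.inl rfl) x₂ h₂ x₃ h₃)
      (H2 b₁ (Or.inr rfl) x₂ h₂ x₃ h₃)
    intro t s hts hc
    ext i
    fin_cases i <;>
      simp [PiLp.add_apply, PiLp.smul_apply, smul_eq_mul]
    all_goals first
        | linear_combination (-(x₂*x₃)) * hc
        | linear_combination (-x₂) * hts
        | linear_combination (-x₃) * hts
        | linear_combination -hc
  apply le_antisymm
  · apply convexHull_min _ (convex_convexHull ℝ V)
    rintro p ⟨x₁, h₁, x₂, h₂, x₃, h₃, hp⟩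
    obtain rfl : p = WithLp.toLp 2 ![x₁*x₂*x₃, x₁, x₂, x₃] := congrArg (WithLp.toLp 2) hp
    exact H1 x₁ h₁ x₂ h₂ x₃ h₃
  · apply convexHull_mono
    rintro p ⟨x₁, h₁, x₂, h₂, x₃, h₃, hp⟩
    obtain rfl : p = WithLp.toLp 2 ![x₁*x₂*x₃, x₁, x₂, x₃] := congrArg (WithLp.toLp 2) hp
    refine ⟨x₁, ?_, x₂, ?_, x₃, ?_, rfl⟩ <;>
      rcases h₁ with rfl | rfl <;> rcases h₂ with rfl | rfl <;> rcases h₃ with rfl | rfl <;>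
      constructor <;> first | rfl | linarith
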